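/- Fix γ > 0 and ω ∈ ℝ, and for λ > 0 and r > 0 with r ≠ γ define D(ω, r, λ) := (1/λ²)·(sinh(ωλ) + e^{−ωλ}·(1 − γ/r)·(1 − e^{ωλ} − (γ/r)·log((e^{ωλ}·r − γ)/(r − γ)))), with log the real logarithm. Then for every fixed r > γ, the limit of D(ω, r, λ) as λ → 0⁺ equals ω²/(2·(1 − γ/r)). -/

import Mathlib

open Filter

lemma L1 : Tendsto (fun y : ℝ => (Real.exp y - 1) / y) (nhdsWithin 0 {0}ᶜ) (nhds 1) := by
  have h := hasDerivAt_iff_tendsto_slope.mp (Real.hasDerivAt_exp 0)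
  simp only [Real.exp_zero, slope_def_field] at h
  refine h.congr' ?_
  filter_upwards with y
  simp [slope, Real.exp_zero, div_eq_inv_mul]

lemma L2 : Tendsto (fun y : ℝ => (Real.exp y - 1 - y) / y ^ 2) (nhdsWithin 0 {0}ᶜ) (nhds (1/2)) := by
  apply HasDerivAt.lhopital_zero_nhdsNE
    (f' := fun y => Real.exp y - 1) (g' := fun y => 2 * y)
  · filter_upwards with y
    exact ((Real.hasDerivAt_exp y).sub_const 1).sub (hasDerivAt_id y)
  · filter_upwards with y
    simpa [mul_comm] using hasDerivAt_pow 2 y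
  · filter_upwards [self_mem_nhdsWithin] with y hy
    simpa using hy
  · have h : Tendsto (fun y : ℝ => Real.exp y - 1 - y) (nhds 0) (nhds 0) := by
      have hc : Continuous (fun y : ℝ => Real.exp y - 1 - y) := by continuity
      simpa using hc.tendsto 0
    exact h.mono_left nhdsWithin_le_nhds
  · have h : Tendsto (fun y : ℝ => y ^ 2) (nhds 0) (nhds 0) := by
      simpa using (continuous_pow 2).tendsto (0:ℝ)
    exact h.mono_left nhdsWithin_le_nhds
  · have h : Tendsto (fun y : ℝ => ((Real.exp y - 1)/y) / 2) (nhdsWithin 0 {0}ᶜ) (nhds (1/2)) :=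
      L1.div_const 2
    refine h.congr' ?_
    filter_upwards with y
    rw [div_div, mul_comm]

lemma Lcosh : Tendsto (fun y : ℝ => (Real.cosh y - 1) / y ^ 2) (nhdsWithin 0 {0}ᶜ) (nhds (1/2)) := by
  have hneg : Tendsto (fun y : ℝ => -y) (nhdsWithin 0 {0}ᶜ) (nhdsWithin 0 {0}ᶜ) := by
    apply tendsto_nhdsWithin_of_tendsto_nhds_of_eventually_within
    · simpa using (continuous_neg.tendsto (0:ℝ)).mono_left nhdsWithin_le_nhds
    · filter_upwards [self_mem_nhdsWithin] with y hy
      simpa using (hy : y ≠ 0)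
  have h2 := (L2.add (L2.comp hneg)).div_const 2
  norm_num at h2
  refine h2.congr' ?_
  filter_upwards with y
  rw [Real.cosh_eq]
  ring


/-- The time part `D(ω,r)` of the noncommutative black-hole wave operator
acting on a Fourier mode `e^{iωt}` (Proposition 5.3 of the paper), with
deformation parameter `lam` (the Planck time). -/
noncomputable def Dfun (γ ω r lam : ℝ) : ℝ :=
  (1 / lam ^ 2) *
    (Real.sinh (ω * lam) +
      Real.exp (-(ω * lam)) * (1 - γ / r) *
        (1 - Real.exp (ω * lam) -
          (γ / r) * Real.log ((Real.exp (ω * lam) * r - γ) / (r - γ))))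

/- First limit of Proposition 5.3: the classical limit λ → 0⁺ of D(ω,r,λ), for
fixed r > γ, is ω²/(2(1 − γ/r)). -/

theorem Dfun_classical_limit (γ ω : ℝ) (hγ : 0 < γ) (r : ℝ) (hr : γ < r) :
    Tendsto (fun lam => Dfun γ ω r lam) (nhdsWithin 0 (Set.Ioi 0))
      (nhds (ω ^ 2 / (2 * (1 - γ / r)))) := by
  have hr0 : 0 < r := hγ.trans hr
  have hrγ : 0 < r - γ := sub_pos.mpr hr
  have hrne : r ≠ 0 := hr0.ne'
  have h1a : (0:ℝ) < 1 - γ / r := by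
    rw [sub_pos, div_lt_one hr0]; exact hr
  rcases eq_or_ne ω 0 with hω | hω
  · subst hω
    have : ∀ lam : ℝ, Dfun γ 0 r lam = 0 := by
      intro lam
      simp [Dfun, div_self hrγ.ne']
    simp only [this]
    simpa using tendsto_const_nhds
  -- main case
  set F := nhdsWithin (0:ℝ) (Set.Ioi 0) with hF
  set g : ℝ → ℝ := fun lam => Real.log ((Real.exp (ω * lam) * r - γ) / (r - γ)) with hg
  have hmono : F ≤ nhdsWithin (0:ℝ) {0}ᶜ := by
    apply nhdsWithin_mono
    intro x hx
    exact (ne_of_gt hx : x ≠ 0)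
  have hx : Tendsto (fun lam : ℝ => ω * lam) F (nhdsWithin 0 {0}ᶜ) := by
    apply tendsto_nhdsWithin_of_tendsto_nhds_of_eventually_within
    · have : Tendsto (fun lam : ℝ => ω * lam) (nhds 0) (nhds 0) := by
        simpa using (continuous_mul_left ω).tendsto (0:ℝ)
      exact this.mono_left nhdsWithin_le_nhds
    · filter_upwards [self_mem_nhdsWithin] with lam hlam
      exact mul_ne_zero hω (ne_of_gt hlam)
  have hqc : Tendsto (fun lam : ℝ => (Real.exp (ω * lam) * r - γ) / (r - γ)) (nhds 0) (nhds 1) := by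
    have hc : Continuous (fun lam : ℝ => (Real.exp (ω * lam) * r - γ) / (r - γ)) := by
      continuity
    have := hc.tendsto 0
    simpa [div_self hrγ.ne'] using this
  have hEpos : ∀ᶠ lam in F, 0 < Real.exp (ω * lam) * r - γ := by
    have hc : Continuous (fun lam : ℝ => Real.exp (ω * lam) * r - γ) := by continuity
    have h := (hc.tendsto 0).mono_left (nhdsWithin_le_nhds : F ≤ nhds 0)
    simp only [mul_zero, Real.exp_zero, one_mul] at h
    exact h.eventually (eventually_gt_nhds hrγ)
  have hgne : ∀ᶠ lam in F, g lam ≠ 0 := by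
    filter_upwards [hEpos, self_mem_nhdsWithin] with lam hE hlam hzero
    have hq : 0 < (Real.exp (ω * lam) * r - γ) / (r - γ) := div_pos hE hrγ
    have : (Real.exp (ω * lam) * r - γ) / (r - γ) = 1 := by
      have := Real.exp_log hq
      rw [show Real.log ((Real.exp (ω * lam) * r - γ) / (r - γ)) = g lam from rfl, hzero,
        Real.exp_zero] at this
      exact this.symm
    have h1 : Real.exp (ω * lam) * r - γ = r - γ := (div_eq_one_iff_eq hrγ.ne').mp this
    have h2 : Real.exp (ω * lam) * r = r := by linarith
    have h3 : ω * lam = 0 := by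
      field_simp at h2
      exact (Real.exp_eq_one_iff _).mp h2
    exact mul_ne_zero hω (ne_of_gt hlam) h3
  have hg0 : Tendsto g F (nhdsWithin 0 {0}ᶜ) := by
    apply tendsto_nhdsWithin_of_tendsto_nhds_of_eventually_within
    · have hlog := (Real.continuousAt_log one_ne_zero).tendsto
      have := hlog.comp hqc
      simp only [Real.log_one] at this
      exact this.mono_left nhdsWithin_le_nhds
    · exact hgne
  have hderiv : HasDerivAt g (ω * r / (r - γ)) 0 := by
    have h1 : HasDerivAt (fun lam : ℝ => Real.exp (ω * lam)) ω 0 := by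
      have h0 : HasDerivAt (fun lam : ℝ => ω * lam) ω 0 := by
        simpa using (hasDerivAt_id (0:ℝ)).const_mul ω
      have := (Real.hasDerivAt_exp (ω * 0)).comp 0 h0
      simpa [Function.comp_def] using this
    have h2 : HasDerivAt (fun lam : ℝ => (Real.exp (ω * lam) * r - γ) / (r - γ))
        (ω * r / (r - γ)) 0 := ((h1.mul_const r).sub_const γ).div_const (r - γ)
    have hne : (Real.exp (ω * 0) * r - γ) / (r - γ) ≠ 0 := by
      simp [div_self hrγ.ne']
    have h3 := h2.log hne
    simpa [div_self hrγ.ne'] using h3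
  have hslope : Tendsto (fun lam => g lam / lam) F (nhds (ω * r / (r - γ))) := by
    have h := (hasDerivAt_iff_tendsto_slope.mp hderiv).mono_left hmono
    refine h.congr' ?_
    filter_upwards with lam
    have hg0v : g 0 = 0 := by simp [hg, div_self hrγ.ne']
    simp [slope, hg0v, div_eq_inv_mul]
  -- component limits
  have c1 : Tendsto (fun lam => (Real.cosh (ω * lam) - 1) / lam ^ 2) F (nhds (1/2 * ω ^ 2)) := by
    have h := (Lcosh.comp hx).mul_const (ω ^ 2)
    refine h.congr' ?_
    filter_upwards [self_mem_nhdsWithin] with lam hlam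
    have hlne : lam ≠ 0 := ne_of_gt hlam
    simp only [Function.comp_apply]
    field_simp [mul_pow]
  have c2 : Tendsto (fun lam : ℝ => Real.exp (-(ω * lam))) F (nhds 1) := by
    have hc : Continuous (fun lam : ℝ => Real.exp (-(ω * lam))) := by continuity
    have := (hc.tendsto 0).mono_left (nhdsWithin_le_nhds : F ≤ nhds 0)
    simpa using this
  have c3 : Tendsto (fun lam => (Real.exp (g lam) - 1 - g lam) / (g lam) ^ 2) F (nhds (1/2)) :=
    L2.comp hg0
  have c4 : Tendsto (fun lam => (g lam / lam) ^ 2) F (nhds ((ω * r / (r - γ)) ^ 2)) :=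
    hslope.pow 2
  have main : Tendsto (fun lam =>
      (Real.cosh (ω * lam) - 1) / lam ^ 2 +
        γ / r * (1 - γ / r) * Real.exp (-(ω * lam)) *
          ((Real.exp (g lam) - 1 - g lam) / (g lam) ^ 2) * (g lam / lam) ^ 2) F
      (nhds (1/2 * ω ^ 2 + γ / r * (1 - γ / r) * 1 * (1/2) * (ω * r / (r - γ)) ^ 2)) :=
    c1.add (((c2.const_mul (γ / r * (1 - γ / r))).mul c3).mul c4)
  have heq : (1:ℝ)/2 * ω ^ 2 + γ / r * (1 - γ / r) * 1 * (1/2) * (ω * r / (r - γ)) ^ 2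
      = ω ^ 2 / (2 * (1 - γ / r)) := by
    field_simp
    ring
  rw [heq] at main
  refine main.congr' ?_
  filter_upwards [hEpos, hgne, self_mem_nhdsWithin] with lam hE hgn hlam
  have hlne : lam ≠ 0 := ne_of_gt hlam
  have hq : 0 < (Real.exp (ω * lam) * r - γ) / (r - γ) := div_pos hE hrγ
  have hexpG : Real.exp (g lam) = (Real.exp (ω * lam) * r - γ) / (r - γ) := Real.exp_log hq
  have hEne : Real.exp (ω * lam) ≠ 0 := (Real.exp_pos _).ne'
  rw [Dfun, Real.sinh_eq, Real.cosh_eq, hexpG, Real.exp_neg]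
  have hGdef : Real.log ((Real.exp (ω * lam) * r - γ) / (r - γ)) = g lam := rfl
  rw [hGdef]
  field_simp
  ring
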